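/- arXiv:2603.13147 — 9 statements merged into one kernel-verified Lean document; each statement's English description precedes it below -/
import Mathlib

section
/- Let B be a predicate on L = (Fin n → ℝ≥0) and let G : L be a lower bound of all feasible states, i.e. every H with B H satisfies G ≤ H. If the index j is α-forbidden in G, then the advanced state Function.update G j α is still a lower bound of all feasible states: every H with B H satisfies Function.update G j α ≤ H. (In particular, the LLP advance step preserves the algorithm's lower-bound invariant.) -/
open scoped NNReal

/-- `j` is α-forbidden in `G` with respect to `B`. -/
def AlphaForbidden {n : ℕ} (B : (Fin n → ℝ≥0) → Prop) (G : Fin n → ℝ≥0) (j : Fin n)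
    (α : ℝ≥0) : Prop :=
  ∀ H : Fin n → ℝ≥0, G ≤ H → H j < α → ¬ B H

theorem stmt4 (n : ℕ) (B : (Fin n → ℝ≥0) → Prop) (G : Fin n → ℝ≥0) (j : Fin n)
    (α : ℝ≥0) (hα : G j < α)
    (hlb : ∀ H : Fin n → ℝ≥0, B H → G ≤ H)
    (hforb : AlphaForbidden B G j α) :
    ∀ H : Fin n → ℝ≥0, B H → Function.update G j α ≤ H := by
  intro H hB i
  rcases eq_or_ne i j with rfl | hne
  · simp only [Function.update_self]
    by_contra hlt
    exact hforb H (hlb H hB) (lt_of_not_ge hlt) hB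
  · rw [Function.update_of_ne hne]
    exact hlb H hB i
end

section
/- Let B be a predicate on L = (Fin n → ℝ≥0), let T : L be an upper-bound vector, and let G : L be a lower bound of all feasible states (every H with B H satisfies G ≤ H). If the index j is α-forbidden in G and T j < α, then there is no H : L with H ≤ T and B H; that is, the LLP algorithm correctly reports infeasibility when a required advance exceeds the bound T. -/
open scoped NNReal

theorem stmt5 (n : ℕ) (B : (Fin n → ℝ≥0) → Prop) (T G : Fin n → ℝ≥0) (j : Fin n)
    (α : ℝ≥0) (hα : G j < α)
    (hlb : ∀ H : Fin n → ℝ≥0, B H → G ≤ H)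
    (hforb : AlphaForbidden B G j α)
    (hT : T j < α) :
    ¬ ∃ H : Fin n → ℝ≥0, H ≤ T ∧ B H := by
  rintro ⟨H, hHT, hB⟩
  exact hforb H (hlb H hB) (lt_of_le_of_lt (hHT j) hT) hB
end

section
/- Let B be a lattice-linear predicate on the lattice Fin n → ℕ (pointwise order). If there exists some H with B H, then the set {H | B H} has a least element; that is, the minimum feasible state sought by the LLP algorithm exists and is unique. -/
/-- `j` is forbidden in `G` with respect to `B`. -/
def Forbidden {n : ℕ} (B : (Fin n → ℕ) → Prop) (G : Fin n → ℕ) (j : Fin n) : Prop :=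
  ∀ H : Fin n → ℕ, G ≤ H → H j = G j → ¬ B H

/-- `B` is lattice-linear. -/
def LatticeLinear {n : ℕ} (B : (Fin n → ℕ) → Prop) : Prop :=
  ∀ G : Fin n → ℕ, ¬ B G → ∃ j : Fin n, Forbidden B G j

theorem stmt7 (n : ℕ) (B : (Fin n → ℕ) → Prop) (hLL : LatticeLinear B)
    (hex : ∃ H : Fin n → ℕ, B H) :
    ∃ G : Fin n → ℕ, IsLeast {H : Fin n → ℕ | B H} G := by
  set M : Fin n → ℕ := fun j => sInf {k | ∃ H, B H ∧ H j = k} with hM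
  have hle : ∀ H, B H → M ≤ H := by
    intro H hH j
    exact Nat.sInf_le ⟨H, hH, rfl⟩
  have hBM : B M := by
    by_contra hnB
    obtain ⟨j, hj⟩ := hLL M hnB
    have hne : {k | ∃ H, B H ∧ H j = k}.Nonempty := by
      obtain ⟨H, hH⟩ := hex
      exact ⟨H j, H, hH, rfl⟩
    obtain ⟨H, hH, hHj⟩ := Nat.sInf_mem hne
    exact hj H (hle H hH) hHj hH
  exact ⟨M, hBM, fun H hH => hle H hH⟩
end

section
/- Let E : Fin n → Fin n → Prop be the edge relation of a directed graph and w : Fin n → Fin n → ℝ≥0 its nonnegative edge weights. Define the SSSP feasibility predicate on states G : Fin n → ℝ≥0∞ (extended nonnegative reals, ordered pointwise) by B G ↔ ∀ u v, E u v → G v ≤ G u + w u v. Then B is lattice-linear with respect to the reverse (dual) pointwise order: for every G with ¬B G there exists a vertex v such that for every H with H ≤ G (pointwise) and H v = G v, B H is false. (This is the forbiddenness structure underlying the LLP formulation of Single-Source Shortest Paths, where distance estimates start at ∞ and only decrease.) -/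
open scoped NNReal ENNReal

theorem stmt10 (n : ℕ) (E : Fin n → Fin n → Prop) (w : Fin n → Fin n → ℝ≥0) :
    ∀ G : Fin n → ℝ≥0∞, ¬ (∀ u v, E u v → G v ≤ G u + (w u v : ℝ≥0∞)) →
      ∃ v : Fin n, ∀ H : Fin n → ℝ≥0∞, H ≤ G → H v = G v →
        ¬ (∀ u v', E u v' → H v' ≤ H u + (w u v' : ℝ≥0∞)) := by
  intro G hG
  push_neg at hG
  obtain ⟨u, v, hE, hlt⟩ := hG
  refine ⟨v, fun H hH hHv hB => ?_⟩
  have := hB u v hE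
  rw [hHv] at this
  exact absurd (this.trans (add_le_add_left (hH u) _)) (not_le.mpr hlt)
end

section
/- Let P : Fin n → Finset (Fin n) assign each job its set of prerequisite jobs and t : Fin n → ℕ its processing time. Define the job-scheduling feasibility predicate on states G : Fin n → ℕ (pointwise order) by B G ↔ ∀ j, (P j).sup G + t j ≤ G j, where (P j).sup G is the maximum of G over P j (0 if P j is empty). Then B is lattice-linear: for every G with ¬B G there exists a job j such that for every H with G ≤ H (pointwise) and H j = G j, B H is false. -/
theorem stmt11 (n : ℕ) (P : Fin n → Finset (Fin n)) (t : Fin n → ℕ) :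
    ∀ G : Fin n → ℕ, ¬ (∀ j, (P j).sup G + t j ≤ G j) →
      ∃ j : Fin n, ∀ H : Fin n → ℕ, G ≤ H → H j = G j →
        ¬ (∀ j', (P j').sup H + t j' ≤ H j') := by
  intro G hG
  push_neg at hG
  obtain ⟨j, hj⟩ := hG
  refine ⟨j, fun H hGH hHj hB => ?_⟩
  have := hB j
  have hsup : (P j).sup G ≤ (P j).sup H := Finset.sup_mono_fun (fun i _ => hGH i)
  omega
end

section
/- Let N, C : ℕ, let wt : Fin N → ℕ and val : Fin N → ℕ be item weights and values. Consider states G : Fin (N+1) → Fin (C+1) → ℕ (dynamic-programming tables ordered pointwise, with index set the pairs (k, c)). Define the knapsack feasibility predicate B G ↔ for every item k : Fin N and capacity c : Fin (C+1): G k.castSucc c ≤ G k.succ c, and whenever wt k ≤ c, also val k + G k.castSucc (the capacity c - wt k) ≤ G k.succ c. Then B is lattice-linear: for every G with ¬B G there exists a table cell (k, c) such that for every H ≥ G (pointwise) agreeing with G at (k, c), B H is false. -/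
/-- The knapsack DP feasibility predicate on tables `G : Fin (N+1) → Fin (C+1) → ℕ`:
each entry for item `k.succ` dominates the skip option and, when the item fits,
the take option. -/
def KnapFeasible {N C : ℕ} (wt val : Fin N → ℕ) (G : Fin (N + 1) → Fin (C + 1) → ℕ) : Prop :=
  ∀ (k : Fin N) (c : Fin (C + 1)),
    G k.castSucc c ≤ G k.succ c ∧
    ∀ _ : wt k ≤ (c : ℕ),
      val k + G k.castSucc ⟨(c : ℕ) - wt k, lt_of_le_of_lt (Nat.sub_le _ _) c.isLt⟩
        ≤ G k.succ c

theorem stmt12 (N C : ℕ) (wt val : Fin N → ℕ) :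
    ∀ G : Fin (N + 1) → Fin (C + 1) → ℕ, ¬ KnapFeasible wt val G →
      ∃ (k : Fin (N + 1)) (c : Fin (C + 1)),
        ∀ H : Fin (N + 1) → Fin (C + 1) → ℕ, G ≤ H → H k c = G k c →
          ¬ KnapFeasible wt val H := by
  intro G hG
  simp only [KnapFeasible, not_forall] at hG
  obtain ⟨k, c, hkc⟩ := hG
  rw [not_and_or] at hkc
  refine ⟨k.succ, c, ?_⟩
  intro H hGH hHeq hB
  obtain ⟨h1, h2⟩ := hB k c
  rcases hkc with h | h
  · exact h (le_trans (hGH k.castSucc c) (hHeq ▸ h1))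
  · push_neg at h
    obtain ⟨hw, hlt⟩ := h
    exact absurd (le_trans (Nat.add_le_add_left (hGH k.castSucc _) _) (hHeq ▸ h2 hw))
      (not_le.mpr hlt)
end

section
/- Let E : Fin n → Fin n → Prop be the edge relation of a directed graph. Consider states G : Fin n → Fin n → Prop ordered pointwise by implication (G ≤ H iff ∀ u v, G u v → H u v). Define the transitive-closure feasibility predicate B G ↔ (∀ u v, E u v → G u v) ∧ (∀ u x v, G u x → G x v → G u v). Then B is lattice-linear: for every G with ¬B G there exists a pair (u, v) such that for every H with G ≤ H and (H u v ↔ G u v), B H is false. -/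
/-- Transitive-closure feasibility: `G` contains all edges of `E` and is transitive. -/
def TCFeasible {n : ℕ} (E : Fin n → Fin n → Prop) (G : Fin n → Fin n → Prop) : Prop :=
  (∀ u v, E u v → G u v) ∧ (∀ u x v, G u x → G x v → G u v)

theorem stmt13 (n : ℕ) (E : Fin n → Fin n → Prop) :
    ∀ G : Fin n → Fin n → Prop, ¬ TCFeasible E G →
      ∃ u v : Fin n, ∀ H : Fin n → Fin n → Prop,
        (∀ a b, G a b → H a b) → (H u v ↔ G u v) → ¬ TCFeasible E H := by
  intro G hG
  rw [TCFeasible, not_and_or] at hG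
  rcases hG with h | h
  · push_neg at h
    obtain ⟨u, v, hE, hG⟩ := h
    exact ⟨u, v, fun H hle hiff hB => hG (hiff.mp (hB.1 u v hE))⟩
  · push_neg at h
    obtain ⟨u, x, v, hux, hxv, hG⟩ := h
    exact ⟨u, v, fun H hle hiff hB =>
      hG (hiff.mp (hB.2 u x v (hle _ _ hux) (hle _ _ hxv)))⟩
end

section
/- Consider a stable marriage instance with n men and n women, where mpref : Fin n → Fin n → Fin n gives each man's preference list (mpref m j is the woman in position j of man m's list) and wrank : Fin n → Fin n → ℕ gives each woman's ranking of the men (lower rank preferred). States are proposal-index vectors G : Fin n → Fin n ordered pointwise. Say man m is blocked in G if, letting w = mpref m (G m), there exist m' ≠ m and j ≤ G m' with mpref m' j = w and wrank w m' < wrank w m. Define B G ↔ no man is blocked in G. Then B is lattice-linear: for every G with ¬B G there exists a man m such that for every H with G ≤ H (pointwise) and H m = G m, B H is false. -/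
/-- Man `m` is blocked in the proposal-index state `G`: letting `w` be the woman
he currently targets, some other man `m'` also targets `w` (at some position
`j ≤ G m'` of his list) and `w` strictly prefers `m'` to `m`. -/
def Blocked {n : ℕ} (mpref : Fin n → Fin n → Fin n) (wrank : Fin n → Fin n → ℕ)
    (G : Fin n → Fin n) (m : Fin n) : Prop :=
  ∃ m' : Fin n, m' ≠ m ∧ ∃ j : Fin n, j ≤ G m' ∧
    mpref m' j = mpref m (G m) ∧
    wrank (mpref m (G m)) m' < wrank (mpref m (G m)) m

theorem stmt14 (n : ℕ) (mpref : Fin n → Fin n → Fin n) (wrank : Fin n → Fin n → ℕ) :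
    ∀ G : Fin n → Fin n, ¬ (∀ m : Fin n, ¬ Blocked mpref wrank G m) →
      ∃ m : Fin n, ∀ H : Fin n → Fin n, G ≤ H → H m = G m →
        ¬ (∀ m0 : Fin n, ¬ Blocked mpref wrank H m0) := by
  intro G hG
  push_neg at hG
  obtain ⟨m, m', hne, j, hj, h1, h2⟩ := hG
  refine ⟨m, fun H hGH hHm hall => hall m ⟨m', hne, j, hj.trans (hGH m'), ?_, ?_⟩⟩ <;>
    rw [hHm] <;> assumption
end

section
/- Let w : Fin n → Fin n → ℝ≥0∞ be edge weights of a directed graph on Fin n (with w u v = ∞ encoding the absence of an edge) and fix a source s : Fin n. For v : Fin n define the shortest-path distance d v as the infimum, over all k : ℕ and all walks p : Fin (k+1) → Fin n with p 0 = s and p k = v, of the total weight ∑_{i<k} w (p i) (p (i+1)). Then d is the greatest element of the set {G : Fin n → ℝ≥0∞ | G s = 0 ∧ ∀ u v, G v ≤ G u + w u v}; that is, the shortest-path distances are exactly the extremal fixed point of the relaxation constraints that the LLP-SSSP solver converges to. -/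
open scoped ENNReal

theorem stmt16 (n : ℕ) (w : Fin n → Fin n → ℝ≥0∞) (s : Fin n) :
    IsGreatest {G : Fin n → ℝ≥0∞ | G s = 0 ∧ ∀ u v, G v ≤ G u + w u v}
      (fun v : Fin n =>
        ⨅ (k : ℕ) (p : Fin (k + 1) → Fin n) (_ : p 0 = s) (_ : p (Fin.last k) = v),
          ∑ i : Fin k, w (p i.castSucc) (p i.succ)) := by
  constructor
  · constructor
    · refine le_antisymm ?_ zero_le
      refine le_trans (iInf_le _ 0) ?_
      refine le_trans (iInf_le _ (fun _ => s)) ?_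
      refine le_trans (iInf_le _ rfl) ?_
      refine le_trans (iInf_le _ rfl) ?_
      simp
    · intro u v
      simp only [ENNReal.iInf_add]
      refine le_iInf fun k => le_iInf fun p => le_iInf fun h0 => le_iInf fun hl => ?_
      refine le_trans (iInf_le _ (k + 1)) ?_
      refine le_trans (iInf_le _ (Fin.snoc p v)) ?_
      have h0' : (Fin.snoc p v : Fin (k + 2) → Fin n) 0 = s := by
        rw [show (0 : Fin (k + 2)) = Fin.castSucc 0 from rfl, Fin.snoc_castSucc]
        exact h0
      refine le_trans (iInf_le _ h0') ?_
      refine le_trans (iInf_le _ (by simp)) ?_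
      rw [Fin.sum_univ_castSucc]
      gcongr with i
      · rw [show (Fin.castSucc i).castSucc = Fin.castSucc (i.castSucc) from rfl,
          show (Fin.castSucc i).succ = Fin.castSucc (i.succ) from rfl,
          Fin.snoc_castSucc, Fin.snoc_castSucc]
      · rw [show (Fin.last k).castSucc = Fin.castSucc (Fin.last k) from rfl,
          Fin.snoc_castSucc, Fin.succ_last, Fin.snoc_last, hl]
  · rintro G ⟨hGs, hrel⟩ v
    refine le_iInf fun k => le_iInf fun p => le_iInf fun h0 => le_iInf fun hl => ?_
    subst hl
    induction k with
    | zero =>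
      have : p (Fin.last 0) = s := h0
      simp only [Finset.univ_eq_empty, Finset.sum_empty]
      exact le_of_eq (by rw [show Fin.last 0 = 0 from rfl, h0, hGs])
    | succ k ih =>
      have h0' : (p ∘ Fin.castSucc) 0 = s := h0
      calc G (p (Fin.last (k + 1)))
          ≤ G (p (Fin.castSucc (Fin.last k))) + w (p (Fin.castSucc (Fin.last k))) (p (Fin.last (k + 1))) := by
            exact hrel _ _
        _ ≤ (∑ i : Fin k, w ((p ∘ Fin.castSucc) i.castSucc) ((p ∘ Fin.castSucc) i.succ))
              + w (p (Fin.castSucc (Fin.last k))) (p (Fin.last (k + 1))) := by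
            gcongr
            exact ih (p ∘ Fin.castSucc) h0'
        _ = ∑ i : Fin (k + 1), w (p i.castSucc) (p i.succ) := by
            rw [Fin.sum_univ_castSucc]
            congr 1
end
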